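/- Let p₁ ≠ p₂ be distributions on a finite set E with L_𝒳(p₁,p₂) ≥ μ₀ > 0, and let p̂₁, p̂₂ be empirical estimates from n₁, n₂ samples with min(n₁,n₂) ≥ 8 log(4|𝒳|/δ)/μ₀². Suppose |p̂_i(X) − p_i(X)| ≤ √(log(4|𝒳|/δ)/(2 n_i)) for each X ∈ 𝒳 and i ∈ {1,2}. Then L_𝒳(p̂₁, p̂₂) ≥ √(2 log(4|𝒳|/δ)/min(n₁,n₂)). -/
import Mathlib


noncomputable def langMetric {E : Type*} [DecidableEq E]
    (𝒳 : Finset (Finset E)) (h𝒳 : 𝒳.Nonempty) (p p' : E → ℝ) : ℝ :=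
  𝒳.sup' h𝒳 (fun X => |∑ x ∈ X, p x - ∑ x ∈ X, p' x|)

/-- Lower bound on the language metric between empirical estimates of two distinct
distributions with `L_𝒳(p₁,p₂) ≥ μ₀`, given enough samples and the Hoeffding-type
concentration event. -/
theorem langMetric_lower_distinct_dist {E : Type*} [Fintype E] [DecidableEq E]
    (𝒳 : Finset (Finset E)) (h𝒳 : 𝒳.Nonempty)
    (δ μ₀ : ℝ) (hδ0 : 0 < δ) (hδ1 : δ < 1) (hμ₀ : 0 < μ₀)
    (p₁ p₂ q₁ q₂ : E → ℝ)
    (hp₁ : (∀ x, 0 ≤ p₁ x) ∧ ∑ x, p₁ x = 1)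
    (hp₂ : (∀ x, 0 ≤ p₂ x) ∧ ∑ x, p₂ x = 1)
    (hne : p₁ ≠ p₂)
    (hsep : μ₀ ≤ langMetric 𝒳 h𝒳 p₁ p₂)
    (n₁ n₂ : ℕ) (hn₁ : 0 < n₁) (hn₂ : 0 < n₂)
    (hmin : 8 * Real.log (4 * 𝒳.card / δ) / μ₀ ^ 2 ≤ min (n₁ : ℝ) (n₂ : ℝ))
    (h₁ : ∀ X ∈ 𝒳, |∑ x ∈ X, q₁ x - ∑ x ∈ X, p₁ x| ≤
      Real.sqrt (Real.log (4 * 𝒳.card / δ) / (2 * n₁)))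
    (h₂ : ∀ X ∈ 𝒳, |∑ x ∈ X, q₂ x - ∑ x ∈ X, p₂ x| ≤
      Real.sqrt (Real.log (4 * 𝒳.card / δ) / (2 * n₂))) :
    Real.sqrt (2 * Real.log (4 * 𝒳.card / δ) / min (n₁ : ℝ) (n₂ : ℝ)) ≤
      langMetric 𝒳 h𝒳 q₁ q₂ := by

  set L := Real.log (4 * 𝒳.card / δ) with hLdef
  have hcard : (1 : ℝ) ≤ 𝒳.card := by
    exact_mod_cast Nat.one_le_iff_ne_zero.mpr (Finset.card_ne_zero_of_mem h𝒳.choose_spec)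
  have hL : 0 < L := by
    apply Real.log_pos
    have : (1:ℝ) < 4 * 𝒳.card := by nlinarith
    calc (1:ℝ) < 4 * 𝒳.card / 1 := by simpa using this
    _ ≤ 4 * 𝒳.card / δ := by
        apply div_le_div_of_nonneg_left (by linarith) hδ0 (le_of_lt hδ1)
  set m := min (n₁ : ℝ) (n₂ : ℝ) with hmdef
  have hm : 0 < m := lt_min (by exact_mod_cast hn₁) (by exact_mod_cast hn₂)
  set s := Real.sqrt (L / (2 * m)) with hsdef
  have hs4 : s ≤ μ₀ / 4 := by
    rw [hsdef, show μ₀ / 4 = Real.sqrt ((μ₀/4)^2) by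
      rw [Real.sqrt_sq (by positivity)]]
    apply Real.sqrt_le_sqrt
    rw [div_le_iff₀ (by positivity)]
    nlinarith [(div_le_iff₀ (by positivity : (0:ℝ) < μ₀^2)).mp hmin]
  obtain ⟨X, hX, hXeq⟩ := Finset.exists_mem_eq_sup' h𝒳
    (fun X => |∑ x ∈ X, p₁ x - ∑ x ∈ X, p₂ x|)
  have hsepX : μ₀ ≤ |∑ x ∈ X, p₁ x - ∑ x ∈ X, p₂ x| := by
    calc μ₀ ≤ langMetric 𝒳 h𝒳 p₁ p₂ := hsep
    _ = _ := hXeq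
  have hs1 : Real.sqrt (L / (2 * n₁)) ≤ s := by
    apply Real.sqrt_le_sqrt
    apply div_le_div_of_nonneg_left hL.le (by positivity)
    have : m ≤ (n₁:ℝ) := min_le_left _ _
    linarith
  have hs2 : Real.sqrt (L / (2 * n₂)) ≤ s := by
    apply Real.sqrt_le_sqrt
    apply div_le_div_of_nonneg_left hL.le (by positivity)
    have : m ≤ (n₂:ℝ) := min_le_right _ _
    linarith
  have hq1 := (h₁ X hX).trans hs1
  have hq2 := (h₂ X hX).trans hs2
  have hlow : 2 * s ≤ |∑ x ∈ X, q₁ x - ∑ x ∈ X, q₂ x| := by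
    have habs : |∑ x ∈ X, p₁ x - ∑ x ∈ X, p₂ x|
        ≤ |∑ x ∈ X, q₁ x - ∑ x ∈ X, q₂ x| + s + s := by
      have := abs_sub_abs_le_abs_sub (∑ x ∈ X, p₁ x - ∑ x ∈ X, p₂ x)
        (∑ x ∈ X, q₁ x - ∑ x ∈ X, q₂ x)
      have h3 : |(∑ x ∈ X, p₁ x - ∑ x ∈ X, p₂ x) - (∑ x ∈ X, q₁ x - ∑ x ∈ X, q₂ x)|
          ≤ s + s := by
        calc |(∑ x ∈ X, p₁ x - ∑ x ∈ X, p₂ x) - (∑ x ∈ X, q₁ x - ∑ x ∈ X, q₂ x)|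
            = |(∑ x ∈ X, q₁ x - ∑ x ∈ X, p₁ x) - (∑ x ∈ X, q₂ x - ∑ x ∈ X, p₂ x)| := by
              rw [show (∑ x ∈ X, p₁ x - ∑ x ∈ X, p₂ x) - (∑ x ∈ X, q₁ x - ∑ x ∈ X, q₂ x)
                = -((∑ x ∈ X, q₁ x - ∑ x ∈ X, p₁ x) - (∑ x ∈ X, q₂ x - ∑ x ∈ X, p₂ x)) by ring,
                abs_neg]
        _ ≤ |∑ x ∈ X, q₁ x - ∑ x ∈ X, p₁ x| + |∑ x ∈ X, q₂ x - ∑ x ∈ X, p₂ x| :=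
              abs_sub _ _
        _ ≤ s + s := add_le_add hq1 hq2
      linarith
    linarith
  have hgoal : Real.sqrt (2 * L / m) = 2 * s := by
    rw [hsdef, show (2:ℝ) * L / m = 4 * (L / (2 * m)) by field_simp; ring,
      show (4:ℝ) = 2^2 by norm_num, Real.sqrt_mul (by positivity), Real.sqrt_sq (by norm_num)]
  rw [hgoal]
  calc 2 * s ≤ |∑ x ∈ X, q₁ x - ∑ x ∈ X, q₂ x| := hlow
  _ ≤ langMetric 𝒳 h𝒳 q₁ q₂ := by unfold langMetric; exact Finset.le_sup' (fun X => |∑ x ∈ X, q₁ x - ∑ x ∈ X, q₂ x|) hX
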